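/- If a Polish group G is a topological factor-group of a closed subgroup of a Polish group H, then for every Borel G-space X there is a Borel H-space Y with E^X_G Borel reducible to E^Y_H. -/

import Mathlib

open Filter Topology Set

/-- A Borel `H`-space: a standard Borel space together with a Borel-measurable
action of `H`. -/
structure BorelActionSpace (H : Type*) [Group H] [MeasurableSpace H] where
  Y : Type
  [mY : MeasurableSpace Y]
  [sbY : StandardBorelSpace Y]
  act : H → Y → Y
  one_act : ∀ y, act 1 y = y
  mul_act : ∀ g h y, act (g * h) y = act g (act h y)
  meas : Measurable fun p : H × Y => act p.1 p.2

attribute [instance] BorelActionSpace.mY BorelActionSpace.sbY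


namespace BorelReducibleAux

section Selector

variable {α : Type*} [MetricSpace α]

open Classical in
/-- Greedy approximation sequence of indices into a dense sequence `d`, approaching
the `E`-class of `x`. -/
noncomputable def selSeq (E : α → α → Prop) (d : ℕ → α) : ℕ → α → ℕ
  | 0, x =>
      if h : ∃ n, ∃ y, E x y ∧ dist (d n) y < (1 / 2 : ℝ) ^ (0 : ℕ) then Nat.find h else 0
  | (k + 1), x =>
      if h : ∃ n, (∃ y, E x y ∧ dist (d n) y < (1 / 2 : ℝ) ^ (k + 1)) ∧
          dist (d n) (d (selSeq E d k x)) < (1 / 2 : ℝ) ^ (k + 1) + (1 / 2 : ℝ) ^ k then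
        Nat.find h
      else 0

variable {E : α → α → Prop} {d : ℕ → α}

theorem selSeq_cond0 (hd : DenseRange d) (hrefl : ∀ x, E x x) (x : α) :
    ∃ n, ∃ y, E x y ∧ dist (d n) y < (1 / 2 : ℝ) ^ (0 : ℕ) := by
  classical
  obtain ⟨n, hn⟩ := hd.exists_dist_lt x (by norm_num : (0 : ℝ) < 1)
  exact ⟨n, x, hrefl x, by rw [dist_comm] at hn; simpa using hn⟩

theorem selSeq_spec (hd : DenseRange d) (hrefl : ∀ x, E x x) :
    ∀ k x, ∃ y, E x y ∧ dist (d (selSeq E d k x)) y < (1 / 2 : ℝ) ^ k := by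
  classical
  intro k
  induction k with
  | zero =>
    intro x
    rw [selSeq, dif_pos (selSeq_cond0 hd hrefl x)]
    exact Nat.find_spec (selSeq_cond0 hd hrefl x)
  | succ k ih =>
    intro x
    obtain ⟨y, hy, hdy⟩ := ih x
    have hcond : ∃ n, (∃ y, E x y ∧ dist (d n) y < (1 / 2 : ℝ) ^ (k + 1)) ∧
        dist (d n) (d (selSeq E d k x)) < (1 / 2 : ℝ) ^ (k + 1) + (1 / 2 : ℝ) ^ k := by
      obtain ⟨n, hn⟩ := hd.exists_dist_lt y (by positivity : (0 : ℝ) < (1 / 2 : ℝ) ^ (k + 1))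
      rw [dist_comm] at hn
      refine ⟨n, ⟨y, hy, hn⟩, ?_⟩
      calc dist (d n) (d (selSeq E d k x))
          ≤ dist (d n) y + dist y (d (selSeq E d k x)) := dist_triangle _ _ _
        _ < (1 / 2 : ℝ) ^ (k + 1) + (1 / 2 : ℝ) ^ k := by
            rw [dist_comm y]; exact add_lt_add hn hdy
    rw [selSeq, dif_pos hcond]
    exact (Nat.find_spec hcond).1

theorem selSeq_condS (hd : DenseRange d) (hrefl : ∀ x, E x x) (k : ℕ) (x : α) :
    ∃ n, (∃ y, E x y ∧ dist (d n) y < (1 / 2 : ℝ) ^ (k + 1)) ∧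
      dist (d n) (d (selSeq E d k x)) < (1 / 2 : ℝ) ^ (k + 1) + (1 / 2 : ℝ) ^ k := by
  classical
  obtain ⟨y, hy, hdy⟩ := selSeq_spec hd hrefl k x
  obtain ⟨n, hn⟩ := hd.exists_dist_lt y (by positivity : (0 : ℝ) < (1 / 2 : ℝ) ^ (k + 1))
  rw [dist_comm] at hn
  refine ⟨n, ⟨y, hy, hn⟩, ?_⟩
  calc dist (d n) (d (selSeq E d k x))
      ≤ dist (d n) y + dist y (d (selSeq E d k x)) := dist_triangle _ _ _
    _ < (1 / 2 : ℝ) ^ (k + 1) + (1 / 2 : ℝ) ^ k := by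
        rw [dist_comm y]; exact add_lt_add hn hdy

theorem selSeq_succ_dist (hd : DenseRange d) (hrefl : ∀ x, E x x) (k : ℕ) (x : α) :
    dist (d (selSeq E d (k + 1) x)) (d (selSeq E d k x)) <
      (1 / 2 : ℝ) ^ (k + 1) + (1 / 2 : ℝ) ^ k := by
  classical
  rw [selSeq, dif_pos (selSeq_condS hd hrefl k x)]
  exact (Nat.find_spec (selSeq_condS hd hrefl k x)).2

theorem selSeq_measurable [MeasurableSpace α] [OpensMeasurableSpace α]
    (hd : DenseRange d) (hrefl : ∀ x, E x x)
    (ho : ∀ (z : α) (ε : ℝ), IsOpen {x | ∃ y, E x y ∧ dist z y < ε}) :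
    ∀ k, Measurable (selSeq E d k) := by
  classical
  intro k
  induction k with
  | zero =>
    apply measurable_to_countable'
    intro n
    have hset : selSeq E d 0 ⁻¹' {n} =
        {x | ∃ y, E x y ∧ dist (d n) y < (1 / 2 : ℝ) ^ (0 : ℕ)} ∩
          ⋂ m, ⋂ (_ : m < n), {x | ∃ y, E x y ∧ dist (d m) y < (1 / 2 : ℝ) ^ (0 : ℕ)}ᶜ := by
      ext x
      rw [mem_preimage, mem_singleton_iff, selSeq, dif_pos (selSeq_cond0 hd hrefl x),
        Nat.find_eq_iff]
      simp only [mem_inter_iff, mem_iInter, mem_compl_iff, mem_setOf_eq]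
    rw [hset]
    exact ((ho _ _).measurableSet).inter
      (MeasurableSet.iInter fun m => MeasurableSet.iInter fun _ =>
        ((ho _ _).measurableSet).compl)
  | succ k ih =>
    apply measurable_to_countable'
    intro n
    have hmeasA : ∀ n' : ℕ, MeasurableSet
        ({x | ∃ y, E x y ∧ dist (d n') y < (1 / 2 : ℝ) ^ (k + 1)} ∩
          selSeq E d k ⁻¹'
            {m | dist (d n') (d m) < (1 / 2 : ℝ) ^ (k + 1) + (1 / 2 : ℝ) ^ k}) := fun n' =>
      ((ho _ _).measurableSet).inter
        (ih (Set.to_countable _).measurableSet)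
    have hset : selSeq E d (k + 1) ⁻¹' {n} =
        ({x | ∃ y, E x y ∧ dist (d n) y < (1 / 2 : ℝ) ^ (k + 1)} ∩
          selSeq E d k ⁻¹'
            {m | dist (d n) (d m) < (1 / 2 : ℝ) ^ (k + 1) + (1 / 2 : ℝ) ^ k}) ∩
          ⋂ m, ⋂ (_ : m < n),
            (({x | ∃ y, E x y ∧ dist (d m) y < (1 / 2 : ℝ) ^ (k + 1)} ∩
              selSeq E d k ⁻¹'
                {m' | dist (d m) (d m') < (1 / 2 : ℝ) ^ (k + 1) + (1 / 2 : ℝ) ^ k}))ᶜ := by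
      ext x
      rw [mem_preimage, mem_singleton_iff, selSeq, dif_pos (selSeq_condS hd hrefl k x),
        Nat.find_eq_iff]
      simp only [mem_inter_iff, mem_iInter, mem_compl_iff, mem_setOf_eq, mem_preimage]
    rw [hset]
    exact (hmeasA n).inter
      (MeasurableSet.iInter fun m => MeasurableSet.iInter fun _ => (hmeasA m).compl)

theorem exists_selector [CompleteSpace α] [SecondCountableTopology α] [Nonempty α]
    [MeasurableSpace α] [BorelSpace α]
    (E : α → α → Prop) (hrefl : ∀ x, E x x)
    (hiff : ∀ x x', E x x' → ∀ y, E x y ↔ E x' y)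
    (hclosed : ∀ x, IsClosed {y | E x y})
    (ho : ∀ (z : α) (ε : ℝ), IsOpen {x | ∃ y, E x y ∧ dist z y < ε}) :
    ∃ r : α → α, Measurable r ∧ (∀ x, E x (r x)) ∧ ∀ x x', E x x' → r x = r x' := by
  classical
  obtain ⟨d, hd⟩ := TopologicalSpace.exists_dense_seq α
  have hcauchy : ∀ x, CauchySeq fun k => d (selSeq E d k x) := by
    intro x
    apply cauchySeq_of_le_geometric (1 / 2 : ℝ) 2 (by norm_num)
    intro k
    have h1 := selSeq_succ_dist hd hrefl k x
    have h2 : ((1 : ℝ) / 2) ^ (k + 1) ≤ (1 / 2 : ℝ) ^ k := by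
      apply pow_le_pow_of_le_one (by norm_num) (by norm_num)
      omega
    rw [dist_comm]
    calc dist (d (selSeq E d (k + 1) x)) (d (selSeq E d k x))
        ≤ (1 / 2 : ℝ) ^ (k + 1) + (1 / 2 : ℝ) ^ k := le_of_lt h1
      _ ≤ 2 * (1 / 2 : ℝ) ^ k := by linarith
  set r : α → α := fun x => limUnder atTop fun k => d (selSeq E d k x) with hrdef
  have hlim : ∀ x, Tendsto (fun k => d (selSeq E d k x)) atTop (𝓝 (r x)) := fun x =>
    (hcauchy x).tendsto_limUnder
  have hmem : ∀ x, E x (r x) := by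
    intro x
    have hcl : r x ∈ closure {y | E x y} := by
      rw [Metric.mem_closure_iff]
      intro ε hε
      have h1 : Tendsto (fun k => dist (r x) (d (selSeq E d k x))) atTop
          (𝓝 (dist (r x) (r x))) := Tendsto.dist tendsto_const_nhds (hlim x)
      rw [dist_self] at h1
      have h2 : Tendsto (fun k : ℕ => (1 / 2 : ℝ) ^ k) atTop (𝓝 0) :=
        tendsto_pow_atTop_nhds_zero_of_lt_one (by norm_num) (by norm_num)
      obtain ⟨k, hk1, hk2⟩ :=
        ((h1.eventually (gt_mem_nhds (half_pos hε))).and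
          (h2.eventually (gt_mem_nhds (half_pos hε)))).exists
      obtain ⟨y, hy, hdy⟩ := selSeq_spec hd hrefl k x
      refine ⟨y, hy, ?_⟩
      calc dist (r x) y ≤ dist (r x) (d (selSeq E d k x)) + dist (d (selSeq E d k x)) y :=
            dist_triangle _ _ _
        _ < ε / 2 + ε / 2 := add_lt_add hk1 (lt_trans hdy hk2)
        _ = ε := by ring
    rwa [(hclosed x).closure_eq] at hcl
  have hconstSeq : ∀ x x', E x x' → ∀ k, selSeq E d k x = selSeq E d k x' := by
    intro x x' hE
    have hEq : ∀ y, E x y ↔ E x' y := hiff x x' hE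
    intro k
    induction k with
    | zero =>
      rw [selSeq, selSeq, dif_pos (selSeq_cond0 hd hrefl x), dif_pos (selSeq_cond0 hd hrefl x')]
      apply le_antisymm
      · obtain ⟨y, h1, h2⟩ := Nat.find_spec (selSeq_cond0 hd hrefl x')
        exact Nat.find_min' _ ⟨y, (hEq y).2 h1, h2⟩
      · obtain ⟨y, h1, h2⟩ := Nat.find_spec (selSeq_cond0 hd hrefl x)
        exact Nat.find_min' _ ⟨y, (hEq y).1 h1, h2⟩
    | succ k ih =>
      rw [selSeq, selSeq, dif_pos (selSeq_condS hd hrefl k x),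
        dif_pos (selSeq_condS hd hrefl k x')]
      apply le_antisymm
      · obtain ⟨⟨y, h1, h2⟩, h3⟩ := Nat.find_spec (selSeq_condS hd hrefl k x')
        exact Nat.find_min' _ ⟨⟨y, (hEq y).2 h1, h2⟩, by rw [ih]; exact h3⟩
      · obtain ⟨⟨y, h1, h2⟩, h3⟩ := Nat.find_spec (selSeq_condS hd hrefl k x)
        exact Nat.find_min' _ ⟨⟨y, (hEq y).1 h1, h2⟩, by rw [← ih]; exact h3⟩
  have hconst : ∀ x x', E x x' → r x = r x' := by
    intro x x' hE
    have hfun : (fun k => d (selSeq E d k x)) = fun k => d (selSeq E d k x') :=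
      funext fun k => by rw [hconstSeq x x' hE k]
    rw [hrdef]
    simp only
    rw [hfun]
  have hrm : Measurable r := by
    apply measurable_of_tendsto_metrizable
      (f := fun k x => d (selSeq E d k x))
    · intro k
      exact measurable_from_top.comp (selSeq_measurable hd hrefl ho k)
    · exact tendsto_pi_nhds.2 hlim
  exact ⟨r, hrm, hmem, hconst⟩

end Selector

section Induced

variable {G H : Type*} [Group G] [Group H]

/-- The induced action of `H` on `X × T`, where `T` is the transversal picked out by the
coset selector `r`. -/
noncomputable def indAct (S : Subgroup H) (φ : ↥S →* G) {X : Type*} (a : G → X → X)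
    (r : H → H) (hrmem : ∀ h : H, h⁻¹ * r h ∈ S)
    (hidem : ∀ u : H, r (r u) = r u) :
    H → (X × {h : H // r h = h}) → (X × {h : H // r h = h}) := fun h' y =>
  (a (φ ⟨(r (h' * (y.2 : H)))⁻¹ * (h' * (y.2 : H)), by
      have h1 := S.inv_mem (hrmem (h' * (y.2 : H)))
      rwa [mul_inv_rev, inv_inv] at h1⟩) y.1,
   ⟨r (h' * (y.2 : H)), hidem _⟩)

theorem part2 [MeasurableSpace G] [MeasurableSpace H]
    [StandardBorelSpace H] [MeasurableMul₂ H] [MeasurableInv H]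
    (S : Subgroup H) (φ : ↥S →* G) (hφm : Measurable ⇑φ) (hφs : Function.Surjective ⇑φ)
    (X : Type) [MeasurableSpace X] [StandardBorelSpace X]
    (a : G → X → X)
    (ha1 : ∀ x, a 1 x = x) (hamul : ∀ g h x, a (g * h) x = a g (a h x))
    (hameas : Measurable fun p : G × X => a p.1 p.2)
    (r : H → H) (hrm : Measurable r) (hrmem : ∀ h : H, h⁻¹ * r h ∈ S)
    (hrc : ∀ h h' : H, h⁻¹ * h' ∈ S → r h = r h')
    (hT : MeasurableSet {h : H | r h = h}) :
    ∃ (B : BorelActionSpace H) (f : X → B.Y), Measurable f ∧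
      ∀ x₁ x₂ : X, (∃ g : G, a g x₁ = x₂) ↔ (∃ h : H, B.act h (f x₁) = f x₂) := by
  have hrmem' : ∀ u : H, (r u)⁻¹ * u ∈ S := fun u => by
    have h1 := S.inv_mem (hrmem u)
    rwa [mul_inv_rev, inv_inv] at h1
  have hidem : ∀ u : H, r (r u) = r u := fun u => (hrc u (r u) (hrmem u)).symm
  haveI : StandardBorelSpace {h : H // r h = h} := hT.standardBorel
  set act₁ := indAct S φ a r hrmem hidem with hact₁
  -- action laws on the intermediate space
  have hone : ∀ y, act₁ 1 y = y := by
    rintro ⟨x, t, ht⟩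
    have hc : ((⟨(r ((1 : H) * t))⁻¹ * ((1 : H) * t), by
        have h1 := S.inv_mem (hrmem ((1 : H) * t))
        rwa [mul_inv_rev, inv_inv] at h1⟩ : ↥S)) = (1 : ↥S) := by
      apply Subtype.ext
      show (r ((1 : H) * t))⁻¹ * ((1 : H) * t) = 1
      rw [one_mul, ht, inv_mul_cancel]
    refine Prod.ext ?_ ?_
    · show a (φ _) x = x
      rw [hc, map_one, ha1]
    · apply Subtype.ext
      show r ((1 : H) * t) = t
      rw [one_mul]; exact ht
  have hmul : ∀ g h y, act₁ (g * h) y = act₁ g (act₁ h y) := by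
    rintro g h ⟨x, t, ht⟩
    have hsec : r (g * r (h * t)) = r (g * h * t) := by
      apply hrc
      have hE : (g * r (h * t))⁻¹ * (g * h * t) = (r (h * t))⁻¹ * (h * t) := by group
      rw [hE]; exact hrmem' _
    refine Prod.ext ?_ ?_
    · show a (φ _) x = a (φ _) (a (φ _) x)
      rw [← hamul, ← map_mul]
      refine congrArg (fun s : ↥S => a (φ s) x) (Subtype.ext ?_)
      show (r (g * h * t))⁻¹ * (g * h * t) =
        ((r (g * r (h * t)))⁻¹ * (g * r (h * t))) * ((r (h * t))⁻¹ * (h * t))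
      rw [hsec]; group
    · apply Subtype.ext
      show r (g * h * t) = r (g * r (h * t))
      exact hsec.symm
  have hmeas₁ : Measurable fun p : H × (X × {h : H // r h = h}) => act₁ p.1 p.2 := by
    have hm1 : Measurable fun p : H × (X × {h : H // r h = h}) => p.1 * ((p.2.2 : H)) :=
      measurable_fst.mul (measurable_subtype_coe.comp (measurable_snd.comp measurable_snd))
    have hmσ : Measurable fun p : H × (X × {h : H // r h = h}) =>
        ((⟨(r (p.1 * (p.2.2 : H)))⁻¹ * (p.1 * (p.2.2 : H)), by
          have h1 := S.inv_mem (hrmem (p.1 * (p.2.2 : H)))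
          rwa [mul_inv_rev, inv_inv] at h1⟩ : ↥S)) := by
      apply Measurable.subtype_mk
      exact ((hrm.comp hm1).inv).mul hm1
    apply Measurable.prodMk
    · exact hameas.comp ((hφm.comp hmσ).prodMk (measurable_fst.comp measurable_snd))
    · exact (hrm.comp hm1).subtype_mk
  -- embed the intermediate space into the reals
  obtain ⟨j, hj⟩ := MeasureTheory.exists_measurableEmbedding_real (X × {h : H // r h = h})
  haveI : StandardBorelSpace ↥(range j) := hj.measurableSet_range.standardBorel
  set e : (X × {h : H // r h = h}) ≃ᵐ ↥(range j) := hj.equivRange with he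
  have ht₀ : r 1 ∈ S := by simpa using hrmem 1
  have ht₀T : r (r 1) = r 1 := hidem 1
  refine ⟨{ Y := ↥(range j)
            act := fun h y => e (act₁ h (e.symm y))
            one_act := fun y => by
              show e (act₁ 1 (e.symm y)) = y
              rw [hone, MeasurableEquiv.apply_symm_apply]
            mul_act := fun g h y => by
              show e (act₁ (g * h) (e.symm y)) =
                e (act₁ g (e.symm (e (act₁ h (e.symm y)))))
              rw [MeasurableEquiv.symm_apply_apply, hmul]
            meas := e.measurable.comp (hmeas₁.comp
              (measurable_fst.prodMk (e.symm.measurable.comp measurable_snd))) },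
          fun x => e (x, ⟨r 1, ht₀T⟩),
          e.measurable.comp (measurable_id.prodMk measurable_const), ?_⟩
  intro x₁ x₂
  constructor
  · rintro ⟨g, hg⟩
    obtain ⟨s, hs⟩ := hφs g
    refine ⟨r 1 * (s : H) * (r 1)⁻¹, ?_⟩
    show e (act₁ _ (e.symm (e (x₁, ⟨r 1, ht₀T⟩)))) = e (x₂, ⟨r 1, ht₀T⟩)
    rw [MeasurableEquiv.symm_apply_apply]
    apply congrArg
    have harg : (r 1 * (s : H) * (r 1)⁻¹) * (r 1) = r 1 * (s : H) := by group
    have hsec : r (r 1 * (s : H)) = r 1 := by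
      have h1 : (r 1 * (s : H))⁻¹ * 1 ∈ S := by
        have : (r 1 * (s : H))⁻¹ * 1 = (s : H)⁻¹ * (r 1)⁻¹ := by group
        rw [this]
        exact S.mul_mem (S.inv_mem s.2) (S.inv_mem ht₀)
      have h2 := hrc (r 1 * (s : H)) 1 h1
      rw [h2]
    refine Prod.ext ?_ ?_
    · show a (φ ⟨(r ((r 1 * (s : H) * (r 1)⁻¹) * (r 1)))⁻¹ *
          ((r 1 * (s : H) * (r 1)⁻¹) * (r 1)), _⟩) x₁ = x₂
      have hc : (⟨(r ((r 1 * (s : H) * (r 1)⁻¹) * (r 1)))⁻¹ *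
          ((r 1 * (s : H) * (r 1)⁻¹) * (r 1)), by
            have h1 := S.inv_mem (hrmem ((r 1 * (s : H) * (r 1)⁻¹) * (r 1)))
            rwa [mul_inv_rev, inv_inv] at h1⟩ : ↥S) = s := by
        apply Subtype.ext
        show (r ((r 1 * (s : H) * (r 1)⁻¹) * (r 1)))⁻¹ *
          ((r 1 * (s : H) * (r 1)⁻¹) * (r 1)) = (s : H)
        rw [harg, hsec]
        group
      rw [hc, hs, hg]
    · apply Subtype.ext
      show r ((r 1 * (s : H) * (r 1)⁻¹) * (r 1)) = r 1
      rw [harg, hsec]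
  · rintro ⟨h', hy⟩
    have hy' : e (act₁ h' (e.symm (e (x₁, ⟨r 1, ht₀T⟩)))) = e (x₂, ⟨r 1, ht₀T⟩) := hy
    rw [MeasurableEquiv.symm_apply_apply] at hy'
    have h1 : act₁ h' (x₁, ⟨r 1, ht₀T⟩) = (x₂, ⟨r 1, ht₀T⟩) := e.injective hy'
    exact ⟨φ ⟨(r (h' * (r 1)))⁻¹ * (h' * (r 1)), by
        have h2 := S.inv_mem (hrmem (h' * (r 1)))
        rwa [mul_inv_rev, inv_inv] at h2⟩, congrArg Prod.fst h1⟩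

end Induced

end BorelReducibleAux

/-- If a Polish group `G` is a topological factor-group of a closed subgroup of
a Polish group `H`, then every orbit equivalence relation of a Borel `G`-space
is Borel reducible to the orbit equivalence relation of some Borel `H`-space. -/
theorem factor_of_closed_subgroup_borel_reducible
    (G H : Type*)
    [Group G] [TopologicalSpace G] [IsTopologicalGroup G] [PolishSpace G]
    [MeasurableSpace G] [BorelSpace G]
    [Group H] [TopologicalSpace H] [IsTopologicalGroup H] [PolishSpace H]
    [MeasurableSpace H] [BorelSpace H]
    (S : Subgroup H) (hS : IsClosed (S : Set H))
    (φ : S →* G) (hφc : Continuous φ) (hφo : IsOpenMap φ)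
    (hφs : Function.Surjective φ)
    (X : Type) [MeasurableSpace X] [StandardBorelSpace X]
    (a : G → X → X)
    (ha1 : ∀ x, a 1 x = x) (hamul : ∀ g h x, a (g * h) x = a g (a h x))
    (hameas : Measurable fun p : G × X => a p.1 p.2) :
    ∃ (B : BorelActionSpace H) (f : X → B.Y), Measurable f ∧
      ∀ x₁ x₂ : X, (∃ g : G, a g x₁ = x₂) ↔ (∃ h : H, B.act h (f x₁) = f x₂) := by
  classical
  -- Step 1: a Borel selector for the left cosets of `S`.
  have key : ∃ r : H → H, Measurable r ∧ (∀ h : H, h⁻¹ * r h ∈ S) ∧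
      ∀ h h' : H, h⁻¹ * h' ∈ S → r h = r h' := by
    have hcm : ∀ s : H, Continuous fun x : H => x * s := fun s => continuous_mul_right s
    have hclosed : ∀ x : H, IsClosed {y : H | x⁻¹ * y ∈ S} := fun x =>
      hS.preimage (continuous_mul_left x⁻¹)
    letI := TopologicalSpace.upgradeIsCompletelyMetrizable H
    haveI : Nonempty H := ⟨1⟩
    haveI hB : BorelSpace H := ‹BorelSpace H›
    have ho : ∀ (z : H) (ε : ℝ),
        IsOpen {x : H | ∃ y, x⁻¹ * y ∈ S ∧ dist z y < ε} := by
      intro z ε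
      have hval : {x : H | ∃ y, x⁻¹ * y ∈ S ∧ dist z y < ε} =
          ⋃ s : S, (fun x : H => x * (s : H)) ⁻¹' {w : H | dist z w < ε} := by
        ext x
        simp only [mem_setOf_eq, mem_iUnion, mem_preimage]
        constructor
        · rintro ⟨y, hy, hd⟩
          refine ⟨⟨x⁻¹ * y, hy⟩, ?_⟩
          show dist z (x * (x⁻¹ * y)) < ε
          rwa [mul_inv_cancel_left]
        · rintro ⟨s, hd⟩
          refine ⟨x * (s : H), ?_, hd⟩
          rw [inv_mul_cancel_left]
          exact s.2
      rw [hval]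
      apply isOpen_iUnion
      intro s
      apply (hcm (s : H)).isOpen_preimage
      have hball : {w : H | dist z w < ε} = Metric.ball z ε := by
        ext w; simp [Metric.mem_ball, dist_comm]
      rw [hball]
      exact Metric.isOpen_ball
    exact BorelReducibleAux.exists_selector (fun x y => x⁻¹ * y ∈ S)
      (fun x => by show x⁻¹ * x ∈ S; rw [inv_mul_cancel]; exact S.one_mem)
      (fun x x' hE y => by
        constructor
        · intro h
          show x'⁻¹ * y ∈ S
          have hrw : x'⁻¹ * y = (x⁻¹ * x')⁻¹ * (x⁻¹ * y) := by group
          rw [hrw]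
          exact S.mul_mem (S.inv_mem hE) h
        · intro h
          show x⁻¹ * y ∈ S
          have hrw : x⁻¹ * y = (x⁻¹ * x') * (x'⁻¹ * y) := by group
          rw [hrw]
          exact S.mul_mem hE h)
      hclosed ho
  obtain ⟨r, hrm, hrmem, hrc⟩ := key
  -- Step 2: the transversal is a Borel set.
  have hT : MeasurableSet {h : H | r h = h} := by
    have hdiag : MeasurableSet {p : H × H | p.1 = p.2} :=
      (isClosed_eq continuous_fst continuous_snd).measurableSet
    exact (hrm.prodMk measurable_id) hdiag
  -- Step 3: instances needed for the abstract construction.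
  haveI : BorelSpace ↥S := Subtype.borelSpace (S : Set H)
  exact BorelReducibleAux.part2 S φ (hφc.measurable) hφs X a ha1 hamul hameas
    r hrm hrmem hrc hT
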